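/- arXiv:1104.2442 — 11 statements merged into one kernel-verified Lean document; each statement's English description precedes it below -/
import Mathlib

section
/- If α > 2, then there exists a unique x > 0 such that f_α(x) = 0. -/
open Real

private noncomputable def Hfun : ℝ → ℝ := fun t => t * Real.cosh t / Real.sinh t

private lemma Hmono : StrictMonoOn Hfun (Set.Ioi 0) := by
  apply strictMonoOn_of_deriv_pos (convex_Ioi 0)
  · apply ContinuousOn.div
    · exact (continuous_id.mul Real.continuous_cosh).continuousOn
    · exact Real.continuous_sinh.continuousOn
    · intro x hx
      exact ne_of_gt (Real.sinh_pos_iff.mpr hx)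
  · intro x hx
    rw [interior_Ioi] at hx
    have hxpos : (0:ℝ) < x := hx
    have hs : Real.sinh x ≠ 0 := ne_of_gt (Real.sinh_pos_iff.mpr hxpos)
    have hd : HasDerivAt Hfun
        (((1 * Real.cosh x + x * Real.sinh x) * Real.sinh x -
          x * Real.cosh x * Real.cosh x) / Real.sinh x ^ 2) x :=
      (((hasDerivAt_id x).mul (Real.hasDerivAt_cosh x)).div (Real.hasDerivAt_sinh x) hs)
    rw [hd.deriv]
    apply div_pos
    · have h1 : x < Real.sinh x := Real.self_lt_sinh_iff.mpr hxpos
      have h2 : 1 < Real.cosh x := by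
        rw [Real.one_lt_cosh]; exact ne_of_gt hxpos
      have h3 : Real.cosh x ^ 2 = Real.sinh x ^ 2 + 1 := Real.cosh_sq x
      nlinarith
    · positivity

/-- if α > 2, then f_α(x) = α·(1 − cosh x) + x·sinh x has a unique
zero x > 0. -/
theorem stmt_6 (α : ℝ) (hα : 2 < α) (f : ℝ → ℝ)
    (hf : f = fun x => α * (1 - Real.cosh x) + x * Real.sinh x) :
    ∃! x : ℝ, 0 < x ∧ f x = 0 := by
  subst hf
  -- key: for x > 0, f x = 0 ↔ Hfun (x/2) = α/2
  have key : ∀ x : ℝ, 0 < x →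
      ((α * (1 - Real.cosh x) + x * Real.sinh x = 0) ↔ Hfun (x/2) = α/2) := by
    intro x hx
    have hs : (0:ℝ) < Real.sinh (x/2) := Real.sinh_pos_iff.mpr (by linarith)
    have hs' : Real.sinh (x/2) ≠ 0 := ne_of_gt hs
    have hc : Real.cosh x = 2 * Real.cosh (x/2) ^ 2 - 1 := by
      rw [show x = 2 * (x/2) by ring, Real.cosh_two_mul]
      ring_nf
      have := Real.cosh_sq (x*(1/2)); linarith
    have hsin : Real.sinh x = 2 * Real.sinh (x/2) * Real.cosh (x/2) := by
      rw [show x = 2 * (x/2) by ring, Real.sinh_two_mul]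
      ring_nf
    have hsq : Real.cosh (x/2) ^ 2 = Real.sinh (x/2) ^ 2 + 1 := Real.cosh_sq (x/2)
    rw [hc, hsin]
    unfold Hfun
    rw [div_eq_div_iff hs' (by norm_num : (2:ℝ) ≠ 0)]
    constructor
    · intro h; nlinarith
    · intro h; nlinarith
  -- find a > 0 with cosh a < α/2
  have hten : Filter.Tendsto Real.cosh (nhdsWithin 0 (Set.Ioi 0)) (nhds 1) := by
    have := Real.continuous_cosh.tendsto 0
    rw [Real.cosh_zero] at this
    exact this.mono_left nhdsWithin_le_nhds
  have hev : ∀ᶠ a in nhdsWithin 0 (Set.Ioi (0:ℝ)), Real.cosh a < α/2 := by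
    apply hten.eventually_lt_const
    linarith
  obtain ⟨a, ha1, ha2⟩ := (hev.and self_mem_nhdsWithin).exists
  have hapos : (0:ℝ) < a := ha2
  -- Hfun a < α/2
  have hHa : Hfun a < α/2 := by
    have hs : (0:ℝ) < Real.sinh a := Real.sinh_pos_iff.mpr hapos
    have h1 : a < Real.sinh a := Real.self_lt_sinh_iff.mpr hapos
    have hcpos : (0:ℝ) < Real.cosh a := (Real.cosh_pos a)
    have : Hfun a ≤ Real.cosh a := by
      unfold Hfun
      rw [div_le_iff₀ hs]
      nlinarith
    linarith
  -- Hfun b > α/2 for b = a + α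
  set b : ℝ := a + α with hb
  have hab : a ≤ b := by linarith
  have hbpos : (0:ℝ) < b := by linarith
  have hHb : α/2 < Hfun b := by
    have hs : (0:ℝ) < Real.sinh b := Real.sinh_pos_iff.mpr hbpos
    have h1 : b < Real.sinh b := Real.self_lt_sinh_iff.mpr hbpos
    have h2 : Real.sinh b < Real.cosh b := Real.sinh_lt_cosh b
    have : b < Hfun b := by
      unfold Hfun
      rw [lt_div_iff₀ hs]
      nlinarith
    linarith
  -- IVT
  have hcont : ContinuousOn Hfun (Set.Icc a b) := by
    apply ContinuousOn.div
    · exact (continuous_id.mul Real.continuous_cosh).continuousOn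
    · exact Real.continuous_sinh.continuousOn
    · intro x hx
      exact ne_of_gt (Real.sinh_pos_iff.mpr (lt_of_lt_of_le hapos hx.1))
  obtain ⟨t, ht, hHt⟩ := intermediate_value_Icc hab hcont
    (Set.mem_Icc.mpr ⟨le_of_lt hHa, le_of_lt hHb⟩)
  have htpos : (0:ℝ) < t := lt_of_lt_of_le hapos ht.1
  refine ⟨2 * t, ⟨by linarith, ?_⟩, ?_⟩
  · simp only
    rw [key (2*t) (by linarith)]
    convert hHt using 2
    ring
  · rintro y ⟨hy, hfy⟩
    simp only at hfy
    rw [key y hy] at hfy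
    have h1 : y/2 ∈ Set.Ioi (0:ℝ) := by simp; linarith
    have h2 : t ∈ Set.Ioi (0:ℝ) := htpos
    have : y/2 = t := by
      apply Hmono.injOn h1 h2
      rw [hfy, hHt]
    linarith
end

section
/- If α > 2, then there exists a unique x_α > 0 such that x_α + (1 − α)·tanh(x_α) = 0; moreover f_α is strictly decreasing on (0, x_α) and strictly increasing on (x_α, ∞). -/
open Real Set

private lemma my_hasDerivAt_tanh (x : ℝ) :
    HasDerivAt Real.tanh (1 / Real.cosh x ^ 2) x := by
  have h := (Real.hasDerivAt_sinh x).div (Real.hasDerivAt_cosh x) (Real.cosh_pos x).ne'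
  have heq : (Real.cosh x * Real.cosh x - Real.sinh x * Real.sinh x) / Real.cosh x ^ 2
      = 1 / Real.cosh x ^ 2 := by
    have := Real.cosh_sq_sub_sinh_sq x
    rw [show Real.cosh x * Real.cosh x - Real.sinh x * Real.sinh x
        = Real.cosh x ^ 2 - Real.sinh x ^ 2 by ring, this]
  rw [heq] at h
  have : Real.tanh = fun x => Real.sinh x / Real.cosh x := by
    funext y; exact Real.tanh_eq_sinh_div_cosh y
  rw [this]
  exact h

private lemma my_tanh_lt_one (x : ℝ) : Real.tanh x < 1 := by
  rw [Real.tanh_eq_sinh_div_cosh, div_lt_one (Real.cosh_pos x)]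
  exact Real.sinh_lt_cosh x

/-- if α > 2, there is a unique x_α > 0 with
x_α + (1 − α)·tanh(x_α) = 0; moreover f_α is strictly decreasing on (0, x_α)
and strictly increasing on (x_α, ∞). -/
theorem stmt_7 (α : ℝ) (hα : 2 < α) (f : ℝ → ℝ)
    (hf : f = fun x => α * (1 - Real.cosh x) + x * Real.sinh x) :
    ∃ xα : ℝ, 0 < xα ∧ xα + (1 - α) * Real.tanh xα = 0 ∧
      (∀ x : ℝ, 0 < x → x + (1 - α) * Real.tanh x = 0 → x = xα) ∧
      StrictAntiOn f (Ioo 0 xα) ∧ StrictMonoOn f (Ioi xα) := by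
  set g : ℝ → ℝ := fun x => x + (1 - α) * Real.tanh x with hg
  have hgd : ∀ x : ℝ, HasDerivAt g (1 + (1 - α) * (1 / Real.cosh x ^ 2)) x := by
    intro x
    exact (hasDerivAt_id x).add ((my_hasDerivAt_tanh x).const_mul (1 - α))
  have htanh_cont : Continuous Real.tanh := by
    have : Real.tanh = fun x => Real.sinh x / Real.cosh x := by
      funext y; exact Real.tanh_eq_sinh_div_cosh y
    rw [this]
    exact Real.continuous_sinh.div Real.continuous_cosh fun x => (Real.cosh_pos x).ne'
  have hgcont : Continuous g :=
    continuous_id.add (continuous_const.mul htanh_cont)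
  have hg0 : g 0 = 0 := by simp [hg]
  -- deriv g is strictly monotone on (0, ∞)
  have hderiv_mono : StrictMonoOn (deriv g) (interior (Ici (0:ℝ))) := by
    rw [interior_Ici]
    intro x hx y hy hxy
    rw [(hgd x).deriv, (hgd y).deriv]
    have hcx : Real.cosh x < Real.cosh y := by
      rw [Real.cosh_lt_cosh, abs_of_pos hx, abs_of_pos (hx.trans hxy)]
      exact hxy
    have hcx2 : Real.cosh x ^ 2 < Real.cosh y ^ 2 := by
      nlinarith [Real.cosh_pos x, Real.cosh_pos y]
    have h1 : 1 / Real.cosh y ^ 2 < 1 / Real.cosh x ^ 2 :=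
      one_div_lt_one_div_of_lt (by positivity) hcx2
    have h2 : (1 - α) < 0 := by linarith
    nlinarith [h1, h2]
  have hconv : StrictConvexOn ℝ (Ici (0:ℝ)) g :=
    StrictMonoOn.strictConvexOn_of_deriv (convex_Ici 0) hgcont.continuousOn hderiv_mono
  -- find c > 0 with g c < 0
  have htend : Filter.Tendsto (fun x => Real.cosh x ^ 2) (nhds 0) (nhds 1) := by
    have hc2 : Continuous (fun x => Real.cosh x ^ 2) := Real.continuous_cosh.pow 2
    convert hc2.tendsto (0:ℝ) using 2
    show (1:ℝ) = Real.cosh 0 ^ 2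
    simp
  have hev : ∀ᶠ x in nhds (0:ℝ), Real.cosh x ^ 2 < α - 1 :=
    htend.eventually_lt_const (by linarith)
  obtain ⟨δ, hδpos, hδ⟩ := Metric.eventually_nhds_iff.mp hev
  set c : ℝ := min (δ / 2) 1 with hc
  have hcpos : 0 < c := lt_min (by linarith) one_pos
  have hc1 : c ≤ 1 := min_le_right _ _
  have hcδ : c < δ := lt_of_le_of_lt (min_le_left _ _) (by linarith)
  have hsmall : ∀ x ∈ Icc (0:ℝ) c, Real.cosh x ^ 2 < α - 1 := by
    intro x hx
    apply hδ
    rw [Real.dist_eq, sub_zero, abs_of_nonneg hx.1]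
    exact lt_of_le_of_lt hx.2 hcδ
  have hanti : StrictAntiOn g (Icc 0 c) := by
    apply strictAntiOn_of_deriv_neg (convex_Icc 0 c) hgcont.continuousOn
    intro x hx
    rw [interior_Icc] at hx
    rw [(hgd x).deriv]
    have hx2 : Real.cosh x ^ 2 < α - 1 := hsmall x ⟨hx.1.le, hx.2.le⟩
    have hp : (0:ℝ) < Real.cosh x ^ 2 := by positivity
    have hinv : 1 / Real.cosh x ^ 2 * Real.cosh x ^ 2 = 1 := one_div_mul_cancel hp.ne'
    nlinarith [hinv, hp, hx2, one_div_pos.mpr hp]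
  have hgc : g c < 0 := by
    have := hanti (left_mem_Icc.mpr hcpos.le) (right_mem_Icc.mpr hcpos.le) hcpos
    rwa [hg0] at this
  have hgα : 0 < g α := by
    have ht : Real.tanh α < 1 := my_tanh_lt_one α
    have h2 : (1 - α) < 0 := by linarith
    have : (1 - α) * 1 < (1 - α) * Real.tanh α := by
      exact mul_lt_mul_of_neg_left ht h2
    simp only [hg]
    nlinarith
  have hcα : c < α := lt_of_le_of_lt hc1 (by linarith)
  -- IVT
  obtain ⟨xα, hxmem, hgx⟩ : ∃ xα ∈ Ioo c α, g xα = 0 := by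
    have := intermediate_value_Ioo hcα.le hgcont.continuousOn
    have h0 : (0:ℝ) ∈ Ioo (g c) (g α) := ⟨hgc, hgα⟩
    obtain ⟨x, hx, hx0⟩ := this h0
    exact ⟨x, hx, hx0⟩
  have hxpos : 0 < xα := hcpos.trans hxmem.1
  -- g < 0 on (0, xα)
  have hgneg : ∀ x ∈ Ioo 0 xα, g x < 0 := by
    rintro x ⟨hx0, hxa⟩
    have ha : 0 < (xα - x) / xα := div_pos (by linarith) hxpos
    have hb : 0 < x / xα := div_pos hx0 hxpos
    have hab : (xα - x) / xα + x / xα = 1 := by field_simp; ring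
    have := hconv.2 (self_mem_Ici) (le_of_lt hxpos : (0:ℝ) ≤ xα) hxpos.ne ha hb hab
    simp only [smul_eq_mul, mul_zero, zero_add, hg0, hgx] at this
    have hx' : x / xα * xα = x := by field_simp
    rw [hx'] at this
    linarith [this]
  -- g > 0 on (xα, ∞)
  have hgpos : ∀ x, xα < x → 0 < g x := by
    intro x hxa
    have hx0 : 0 < x := hxpos.trans hxa
    have ha : 0 < (x - xα) / x := div_pos (by linarith) hx0
    have hb : 0 < xα / x := div_pos hxpos hx0
    have hab : (x - xα) / x + xα / x = 1 := by field_simp; ring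
    have := hconv.2 (self_mem_Ici) (le_of_lt hx0 : (0:ℝ) ≤ x) hx0.ne ha hb hab
    simp only [smul_eq_mul, mul_zero, zero_add, hg0] at this
    have hx' : xα / x * x = xα := by field_simp
    rw [hx', hgx] at this
    rcases mul_pos_iff.mp this with ⟨_, h⟩ | ⟨h1, _⟩
    · exact h
    · linarith
  -- derivative of f
  have hfd : ∀ x : ℝ, HasDerivAt f (Real.cosh x * g x) x := by
    intro x
    have h1 : HasDerivAt (fun x => α * (1 - Real.cosh x) + x * Real.sinh x)
        (α * (0 - Real.sinh x) + (1 * Real.sinh x + x * Real.cosh x)) x := by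
      exact (((hasDerivAt_const x (1:ℝ)).sub (Real.hasDerivAt_cosh x)).const_mul α).add
        ((hasDerivAt_id x).mul (Real.hasDerivAt_sinh x))
    rw [hf]
    convert h1 using 1
    simp only [hg]
    rw [Real.tanh_eq_sinh_div_cosh]
    field_simp [(Real.cosh_pos x).ne']
    ring
  have hfcont : Continuous f := by
    rw [hf]; fun_prop
  refine ⟨xα, hxpos, hgx, ?_, ?_, ?_⟩
  · intro y hy hgy
    rcases lt_trichotomy y xα with h | h | h
    · exact absurd hgy (by have := hgneg y ⟨hy, h⟩; simp only [hg] at this; linarith)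
    · exact h
    · exact absurd hgy (by have := hgpos y h; simp only [hg] at this; linarith)
  · apply strictAntiOn_of_deriv_neg (convex_Ioo 0 xα) hfcont.continuousOn
    intro x hx
    rw [interior_Ioo] at hx
    rw [(hfd x).deriv]
    exact mul_neg_of_pos_of_neg (Real.cosh_pos x) (hgneg x hx)
  · apply strictMonoOn_of_deriv_pos (convex_Ioi xα) hfcont.continuousOn
    intro x hx
    rw [interior_Ioi] at hx
    rw [(hfd x).deriv]
    exact mul_pos (Real.cosh_pos x) (hgpos x hx)
end

section
/- If σ̄₁ > σ̃ and σ̄₂ > σ̃, then there exists a unique ρ* > 0 satisfying (σ̄₁ + σ̄₂)·(1 − cosh ρ*) + σ̃·ρ*·sinh ρ* = 0. -/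
open Real

lemma phi_strictMono : StrictMonoOn (fun x => x * Real.cosh x / Real.sinh x) (Set.Ioi 0) := by
  apply strictMonoOn_of_deriv_pos (convex_Ioi 0)
  · exact ContinuousOn.div (continuous_id.mul Real.continuous_cosh).continuousOn
      Real.continuous_sinh.continuousOn
      (fun x hx => ne_of_gt (Real.sinh_pos_iff.mpr hx))
  · intro x hx
    rw [interior_Ioi] at hx
    have hxpos : (0:ℝ) < x := hx
    have hs : Real.sinh x ≠ 0 := ne_of_gt (Real.sinh_pos_iff.mpr hxpos)
    have hd : HasDerivAt (fun x => x * Real.cosh x / Real.sinh x)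
        ((Real.sinh x * Real.cosh x - x) / (Real.sinh x)^2) x := by
      have h1 : HasDerivAt (fun x => x * Real.cosh x)
          (1 * Real.cosh x + x * Real.sinh x) x :=
        (hasDerivAt_id x).mul (Real.hasDerivAt_cosh x)
      have h2 := h1.div (Real.hasDerivAt_sinh x) hs
      refine h2.congr_deriv ?_
      have hc := Real.cosh_sq_sub_sinh_sq x
      rw [div_left_inj' (pow_ne_zero 2 hs)]
      ring_nf
      nlinarith [hc]
    rw [hd.deriv]
    have hx2 : x < Real.sinh x * Real.cosh x := by
      have h2 : 2*x < Real.sinh (2*x) := Real.self_lt_sinh_iff.mpr (by linarith)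
      rw [Real.sinh_two_mul] at h2; linarith
    exact div_pos (by linarith) (pow_pos (Real.sinh_pos_iff.mpr hxpos) 2)

/-- if σ̄₁ > σ̃ and σ̄₂ > σ̃, there exists a unique ρ* > 0 with
(σ̄₁ + σ̄₂)·(1 − cosh ρ*) + σ̃·ρ*·sinh ρ* = 0. -/
theorem stmt_8 (σ₁ σ₂ σt : ℝ) (hσ₁ : 0 < σ₁) (hσ₂ : 0 < σ₂) (hσt : 0 < σt)
    (h₁ : σt < σ₁) (h₂ : σt < σ₂) :
    ∃! ρ : ℝ, 0 < ρ ∧ (σ₁ + σ₂) * (1 - Real.cosh ρ) + σt * ρ * Real.sinh ρ = 0 := by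
  set S : ℝ := σ₁ + σ₂ with hS
  have hSpos : 0 < S := by positivity
  have hS2 : 2 * σt < S := by simp only [hS]; linarith
  set G : ℝ → ℝ := fun x => 2 * σt * x * Real.cosh x - S * Real.sinh x with hG
  -- key identity relating the original equation to G
  have ident : ∀ x : ℝ, S * (1 - Real.cosh (2*x)) + σt * (2*x) * Real.sinh (2*x)
      = 2 * Real.sinh x * G x := by
    intro x
    have hc := Real.cosh_sq_sub_sinh_sq x
    rw [Real.cosh_two_mul, Real.sinh_two_mul]
    simp only [hG]
    nlinarith [hc]
  -- unique positive root of G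
  have key : ∃! x : ℝ, 0 < x ∧ G x = 0 := by
    have hc1 : (1:ℝ) < S / (2*σt) := by
      rw [lt_div_iff₀ (by linarith)]; linarith
    -- small point where G < 0
    have tcosh : Filter.Tendsto Real.cosh (nhdsWithin 0 (Set.Ioi 0)) (nhds 1) := by
      have h := (Real.continuous_cosh.tendsto 0).mono_left
        (nhdsWithin_le_nhds (s := Set.Ioi (0:ℝ)))
      rwa [Real.cosh_zero] at h
    obtain ⟨a, hac, ha0⟩ := ((tcosh.eventually_lt_const hc1).and
      self_mem_nhdsWithin).exists
    have ha0' : (0:ℝ) < a := ha0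
    have hGa : G a < 0 := by
      have h1 : a < Real.sinh a := Real.self_lt_sinh_iff.mpr ha0'
      have h2 : 2 * σt * a * Real.cosh a < 2 * σt * a * (S / (2*σt)) := by
        apply mul_lt_mul_of_pos_left hac (by positivity)
      have h3 : 2 * σt * a * (S / (2*σt)) = S * a := by field_simp
      have h4 : S * a < S * Real.sinh a := by
        exact mul_lt_mul_of_pos_left h1 hSpos
      have h5 : 2 * σt * a * Real.cosh a < S * a := h3 ▸ h2
      simp only [hG]; linarith
    -- big point where G > 0
    set b : ℝ := a + S / (2*σt) with hb
    have hab : a < b := by simp only [hb]; nlinarith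
    have hbc : S / (2*σt) < b := by simp only [hb]; linarith
    have hbS : S < 2 * σt * b := by
      rw [div_lt_iff₀ (by linarith)] at hbc; linarith
    have hGb : 0 < G b := by
      have h1 : Real.sinh b < Real.cosh b := Real.sinh_lt_cosh b
      have h2 : 0 < Real.cosh b := Real.cosh_pos b
      simp only [hG]
      nlinarith
    -- IVT
    have hGcont : Continuous G := by
      simp only [hG]; continuity
    obtain ⟨x, hxmem, hxval⟩ := intermediate_value_Icc (le_of_lt hab)
      hGcont.continuousOn (Set.mem_Icc.mpr ⟨le_of_lt hGa, le_of_lt hGb⟩)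
    have hxpos : 0 < x := lt_of_lt_of_le ha0' hxmem.1
    refine ⟨x, ⟨hxpos, hxval⟩, ?_⟩
    rintro y ⟨hypos, hyval⟩
    -- from G z = 0 get z * cosh z / sinh z = S / (2σt)
    have val : ∀ z : ℝ, 0 < z → G z = 0 → z * Real.cosh z / Real.sinh z = S / (2*σt) := by
      intro z hz hGz
      have hsz : Real.sinh z ≠ 0 := ne_of_gt (Real.sinh_pos_iff.mpr hz)
      simp only [hG] at hGz
      field_simp
      linarith
    have := (val y hypos hyval).trans (val x hxpos hxval).symm
    exact phi_strictMono.injOn hypos hxpos this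
  obtain ⟨x, ⟨hxpos, hxval⟩, hxuniq⟩ := key
  refine ⟨2*x, ⟨by linarith, ?_⟩, ?_⟩
  · rw [ident x, hxval]; ring
  · rintro ρ ⟨hρpos, hρval⟩
    have h2 : ρ = 2 * (ρ/2) := by ring
    have hval : G (ρ/2) = 0 := by
      rw [h2] at hρval
      rw [ident (ρ/2)] at hρval
      have hs : (0:ℝ) < Real.sinh (ρ/2) := Real.sinh_pos_iff.mpr (by linarith)
      have := mul_eq_zero.mp hρval
      rcases this with h | h
      · exfalso; rcases mul_eq_zero.mp h with h' | h' <;> linarith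
      · exact h
    have := hxuniq (ρ/2) ⟨by linarith, hval⟩
    linarith
end

section
/- For every k ∈ ℕ (k ≥ 0) and every a_k ∈ ℝ, the function A_k(y') = a_k·c₁·(y'·cosh(y'ρ*) − (sinh(y'ρ*·√(1+k²))/sinh(ρ*·√(1+k²)))·cosh ρ*) + a_k·c₂·(y'·sinh(y'ρ*) − (sinh(y'ρ*·√(1+k²))/sinh(ρ*·√(1+k²)))·sinh ρ*) satisfies −k²·A_k(y') + (1/ρ*²)·A_k''(y') = A_k(y') + a_k·f_k(y') for all y' ∈ ℝ, together with A_k(0) = 0 and A_k(1) = 0. -/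
open Real

/-- the explicitly given A_k solves
−k²·A_k + (1/ρ*²)·A_k'' = A_k + a_k·f_k on ℝ with A_k(0) = 0 and A_k(1) = 0. -/
theorem stmt_9 (σ₁ σ₂ ρ : ℝ) (hρ : 0 < ρ) (k : ℕ) (a : ℝ)
    (c₁ c₂ : ℝ) (hc₁ : c₁ = (σ₂ - σ₁ * Real.cosh ρ) / Real.sinh ρ) (hc₂ : c₂ = σ₁)
    (fk : ℝ → ℝ)
    (hfk : fk = fun y => (2 / ρ) * (c₁ * Real.sinh (y * ρ) + c₂ * Real.cosh (y * ρ))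
      - (k : ℝ)^2 * y * (c₁ * Real.cosh (y * ρ) + c₂ * Real.sinh (y * ρ)))
    (A : ℝ → ℝ)
    (hA : A = fun y =>
      a * c₁ * (y * Real.cosh (y * ρ)
        - Real.sinh (y * ρ * Real.sqrt (1 + (k : ℝ)^2))
          / Real.sinh (ρ * Real.sqrt (1 + (k : ℝ)^2)) * Real.cosh ρ)
      + a * c₂ * (y * Real.sinh (y * ρ)
        - Real.sinh (y * ρ * Real.sqrt (1 + (k : ℝ)^2))
          / Real.sinh (ρ * Real.sqrt (1 + (k : ℝ)^2)) * Real.sinh ρ)) :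
    (∀ y : ℝ, -(k : ℝ)^2 * A y + (1 / ρ^2) * deriv (deriv A) y = A y + a * fk y) ∧
    A 0 = 0 ∧ A 1 = 0 := by
  subst hA hfk
  set s := Real.sqrt (1 + (k : ℝ)^2) with hs_def
  have hs0 : 0 < s := Real.sqrt_pos.mpr (by positivity)
  have hss : s ^ 2 = 1 + (k : ℝ)^2 := Real.sq_sqrt (by positivity)
  set S := Real.sinh (ρ * s) with hS_def
  have hS : S ≠ 0 := ne_of_gt (Real.sinh_pos_iff.mpr (by positivity))
  -- first derivative
  have key1 : ∀ y : ℝ, HasDerivAt (fun y =>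
      a * c₁ * (y * Real.cosh (y * ρ) - Real.sinh (y * ρ * s) / S * Real.cosh ρ)
      + a * c₂ * (y * Real.sinh (y * ρ) - Real.sinh (y * ρ * s) / S * Real.sinh ρ))
      (a * c₁ * ((Real.cosh (y * ρ) + y * (ρ * Real.sinh (y * ρ)))
          - (ρ * s) * Real.cosh (y * ρ * s) / S * Real.cosh ρ)
       + a * c₂ * ((Real.sinh (y * ρ) + y * (ρ * Real.cosh (y * ρ)))
          - (ρ * s) * Real.cosh (y * ρ * s) / S * Real.sinh ρ)) y := by
    intro y
    have h1 : HasDerivAt (fun x : ℝ => x * ρ) ρ y := by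
      simpa using (hasDerivAt_id y).mul_const ρ
    have h2 : HasDerivAt (fun x : ℝ => x * ρ * s) (ρ * s) y := by
      simpa using h1.mul_const s
    have hc : HasDerivAt (fun x : ℝ => Real.cosh (x * ρ)) (ρ * Real.sinh (y * ρ)) y := by
      simpa [mul_comm] using h1.cosh
    have hsh : HasDerivAt (fun x : ℝ => Real.sinh (x * ρ)) (ρ * Real.cosh (y * ρ)) y := by
      simpa [mul_comm] using h1.sinh
    have hshs : HasDerivAt (fun x : ℝ => Real.sinh (x * ρ * s)) ((ρ * s) * Real.cosh (y * ρ * s)) y := by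
      simpa [mul_comm] using h2.sinh
    have T1 := (((hasDerivAt_id y).mul hc).sub (((hshs.div_const S)).mul_const (Real.cosh ρ))).const_mul (a * c₁)
    have T2 := (((hasDerivAt_id y).mul hsh).sub (((hshs.div_const S)).mul_const (Real.sinh ρ))).const_mul (a * c₂)
    refine (T1.add T2).congr_deriv ?_
    simp only [id_eq]
    ring
  -- second derivative
  have key2 : ∀ y : ℝ, HasDerivAt (fun y =>
      a * c₁ * ((Real.cosh (y * ρ) + y * (ρ * Real.sinh (y * ρ)))
          - (ρ * s) * Real.cosh (y * ρ * s) / S * Real.cosh ρ)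
       + a * c₂ * ((Real.sinh (y * ρ) + y * (ρ * Real.cosh (y * ρ)))
          - (ρ * s) * Real.cosh (y * ρ * s) / S * Real.sinh ρ))
      (a * c₁ * ((2 * ρ * Real.sinh (y * ρ) + y * ρ^2 * Real.cosh (y * ρ))
          - ρ^2 * (1 + (k : ℝ)^2) * Real.sinh (y * ρ * s) / S * Real.cosh ρ)
       + a * c₂ * ((2 * ρ * Real.cosh (y * ρ) + y * ρ^2 * Real.sinh (y * ρ))
          - ρ^2 * (1 + (k : ℝ)^2) * Real.sinh (y * ρ * s) / S * Real.sinh ρ)) y := by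
    intro y
    have h1 : HasDerivAt (fun x : ℝ => x * ρ) ρ y := by
      simpa using (hasDerivAt_id y).mul_const ρ
    have h2 : HasDerivAt (fun x : ℝ => x * ρ * s) (ρ * s) y := by
      simpa using h1.mul_const s
    have hc : HasDerivAt (fun x : ℝ => Real.cosh (x * ρ)) (ρ * Real.sinh (y * ρ)) y := by
      simpa [mul_comm] using h1.cosh
    have hsh : HasDerivAt (fun x : ℝ => Real.sinh (x * ρ)) (ρ * Real.cosh (y * ρ)) y := by
      simpa [mul_comm] using h1.sinh
    have hchs : HasDerivAt (fun x : ℝ => Real.cosh (x * ρ * s)) ((ρ * s) * Real.sinh (y * ρ * s)) y := by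
      simpa [mul_comm] using h2.cosh
    have T1 := ((hc.add ((hasDerivAt_id y).mul (hsh.const_mul ρ))).sub ((((hchs.const_mul (ρ * s)).div_const S)).mul_const (Real.cosh ρ))).const_mul (a * c₁)
    have T2 := ((hsh.add ((hasDerivAt_id y).mul (hc.const_mul ρ))).sub ((((hchs.const_mul (ρ * s)).div_const S)).mul_const (Real.sinh ρ))).const_mul (a * c₂)
    have hsq : (ρ * s) * (ρ * s) = ρ^2 * (1 + (k : ℝ)^2) := by
      have : (ρ * s) * (ρ * s) = ρ^2 * s^2 := by ring
      rw [this, hss]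
    refine (T1.add T2).congr_deriv ?_
    simp only [id_eq]
    linear_combination -(ρ^2 * (a * c₁ * Real.cosh ρ + a * c₂ * Real.sinh ρ)
      * Real.sinh (y * ρ * s) / S) * hss
  have e1 : deriv (fun y =>
      a * c₁ * (y * Real.cosh (y * ρ) - Real.sinh (y * ρ * s) / S * Real.cosh ρ)
      + a * c₂ * (y * Real.sinh (y * ρ) - Real.sinh (y * ρ * s) / S * Real.sinh ρ)) = fun y =>
      a * c₁ * ((Real.cosh (y * ρ) + y * (ρ * Real.sinh (y * ρ)))
          - (ρ * s) * Real.cosh (y * ρ * s) / S * Real.cosh ρ)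
       + a * c₂ * ((Real.sinh (y * ρ) + y * (ρ * Real.cosh (y * ρ)))
          - (ρ * s) * Real.cosh (y * ρ * s) / S * Real.sinh ρ) :=
    funext fun y => (key1 y).deriv
  refine ⟨fun y => ?_, ?_, ?_⟩
  · rw [e1, (key2 y).deriv]
    have hρ' : ρ ≠ 0 := ne_of_gt hρ
    field_simp
    ring
  · norm_num
  · have h1 : (1 : ℝ) * ρ * s = ρ * s := by ring
    simp only [h1, one_mul, ← hS_def, div_self hS]
    ring
end

section
/- For every a₀ ∈ ℝ, the function M₀(y') = −(a₀·μ·c₃/sinh ρ*)·(y'ρ* − ρ* − sinh(y'ρ*)) − a₀·μ·σ̃·ρ* − a₀·μ·c₁ + a₀·μ·c₁·y' + a₀·μ·σ̃·ρ*·(y')² − a₀·μ·(c₁·y'·cosh(y'ρ*) + c₂·y'·sinh(y'ρ*)) satisfies (1/ρ*²)·M₀''(y') = −μ·A₀(y') + a₀·g₀(y') for all y' ∈ ℝ, together with M₀'(0) = 0 and M₀(1) = 0, where A₀(y') = a₀·c₁·(y'·cosh(y'ρ*) − (sinh(y'ρ*)/sinh ρ*)·cosh ρ*) + a₀·c₂·(y'·sinh(y'ρ*)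 − (sinh(y'ρ*)/sinh ρ*)·sinh ρ*) and g₀(y') = (2/ρ*)·μ·(σ̃ − c₁·sinh(y'ρ*) − c₂·cosh(y'ρ*)). -/
open Real

/-- the explicitly given M₀ solves
(1/ρ*²)·M₀'' = −μ·A₀ + a₀·g₀ on ℝ with M₀'(0) = 0 and M₀(1) = 0. -/
theorem stmt_11 (σ₁ σ₂ σt μ ρ : ℝ) (hμ : 0 < μ) (hρ : 0 < ρ) (a : ℝ)
    (c₁ c₂ c₃ : ℝ) (hc₁ : c₁ = (σ₂ - σ₁ * Real.cosh ρ) / Real.sinh ρ) (hc₂ : c₂ = σ₁)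
    (hc₃ : c₃ = c₁ * Real.cosh ρ + c₂ * Real.sinh ρ)
    (A₀ g₀ M₀ : ℝ → ℝ)
    (hA₀ : A₀ = fun y =>
      a * c₁ * (y * Real.cosh (y * ρ) - Real.sinh (y * ρ) / Real.sinh ρ * Real.cosh ρ)
      + a * c₂ * (y * Real.sinh (y * ρ) - Real.sinh (y * ρ) / Real.sinh ρ * Real.sinh ρ))
    (hg₀ : g₀ = fun y =>
      (2 / ρ) * μ * (σt - c₁ * Real.sinh (y * ρ) - c₂ * Real.cosh (y * ρ)))
    (hM₀ : M₀ = fun y =>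
      -(a * μ * c₃ / Real.sinh ρ) * (y * ρ - ρ - Real.sinh (y * ρ))
      - a * μ * σt * ρ - a * μ * c₁
      + a * μ * c₁ * y + a * μ * σt * ρ * y^2
      - a * μ * (c₁ * y * Real.cosh (y * ρ) + c₂ * y * Real.sinh (y * ρ))) :
    (∀ y : ℝ, (1 / ρ^2) * deriv (deriv M₀) y = -μ * A₀ y + a * g₀ y) ∧
    deriv M₀ 0 = 0 ∧ M₀ 1 = 0 := by
  have hsρ : Real.sinh ρ ≠ 0 := ne_of_gt (Real.sinh_pos_iff.mpr hρ)
  have hs : ∀ x : ℝ, HasDerivAt (fun y : ℝ => Real.sinh (y * ρ)) (Real.cosh (x * ρ) * ρ) x := by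
    intro x
    simpa [Function.comp_def] using (Real.hasDerivAt_sinh (x * ρ)).comp x ((hasDerivAt_id x).mul_const ρ)
  have hc : ∀ x : ℝ, HasDerivAt (fun y : ℝ => Real.cosh (y * ρ)) (Real.sinh (x * ρ) * ρ) x := by
    intro x
    simpa [Function.comp_def] using (Real.hasDerivAt_cosh (x * ρ)).comp x ((hasDerivAt_id x).mul_const ρ)
  -- first derivative
  set f : ℝ → ℝ := fun x =>
    -(a * μ * c₃ / Real.sinh ρ) * (ρ - Real.cosh (x * ρ) * ρ)
    + a * μ * c₁ + a * μ * σt * ρ * (2 * x)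
    - a * μ * ((c₁ * Real.cosh (x * ρ) + c₁ * x * (Real.sinh (x * ρ) * ρ))
        + (c₂ * Real.sinh (x * ρ) + c₂ * x * (Real.cosh (x * ρ) * ρ))) with hf
  have hM' : ∀ x : ℝ, HasDerivAt M₀ (f x) x := by
    intro x
    rw [hM₀, hf]
    have h1 : HasDerivAt (fun y : ℝ => y * ρ - ρ - Real.sinh (y * ρ))
        (ρ - Real.cosh (x * ρ) * ρ) x := by
      have := (((hasDerivAt_id x).mul_const ρ).sub_const ρ).sub (hs x)
      simpa [Pi.sub_def] using this
    have h2 : HasDerivAt (fun y : ℝ => c₁ * y * Real.cosh (y * ρ) + c₂ * y * Real.sinh (y * ρ))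
        ((c₁ * Real.cosh (x * ρ) + c₁ * x * (Real.sinh (x * ρ) * ρ))
          + (c₂ * Real.sinh (x * ρ) + c₂ * x * (Real.cosh (x * ρ) * ρ))) x := by
      have hA := (((hasDerivAt_id x).const_mul c₁).mul (hc x))
      have hB := (((hasDerivAt_id x).const_mul c₂).mul (hs x))
      have := hA.add hB
      exact this.congr_deriv (by simp only [id_eq, one_mul]; ring)
    have hy2 : HasDerivAt (fun y : ℝ => y ^ 2) (2 * x) x := by
      simpa using hasDerivAt_pow 2 x
    have := ((((h1.const_mul (-(a * μ * c₃ / Real.sinh ρ))).sub_const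
        (a * μ * σt * ρ)).sub_const (a * μ * c₁)).add
        ((hasDerivAt_id x).const_mul (a * μ * c₁))).add (hy2.const_mul (a * μ * σt * ρ))
    have h := this.sub (h2.const_mul (a * μ))
    exact h.congr_deriv (by ring)
  have hD1 : deriv M₀ = f := funext fun x => (hM' x).deriv
  -- second derivative
  set g : ℝ → ℝ := fun x =>
    -(a * μ * c₃ / Real.sinh ρ) * (-(Real.sinh (x * ρ) * ρ * ρ))
    + a * μ * σt * ρ * 2
    - a * μ * ((c₁ * (Real.sinh (x * ρ) * ρ)
        + (c₁ * (Real.sinh (x * ρ) * ρ) + c₁ * x * (Real.cosh (x * ρ) * ρ * ρ)))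
      + (c₂ * (Real.cosh (x * ρ) * ρ)
        + (c₂ * (Real.cosh (x * ρ) * ρ) + c₂ * x * (Real.sinh (x * ρ) * ρ * ρ)))) with hg
  have hM'' : ∀ x : ℝ, HasDerivAt f (g x) x := by
    intro x
    rw [hf, hg]
    have h1 : HasDerivAt (fun y : ℝ => ρ - Real.cosh (y * ρ) * ρ)
        (-(Real.sinh (x * ρ) * ρ * ρ)) x := by
      have := (hasDerivAt_const x ρ).sub ((hc x).mul_const ρ)
      refine this.congr_deriv ?_
      ring
    have h2 : HasDerivAt (fun y : ℝ =>
        (c₁ * Real.cosh (y * ρ) + c₁ * y * (Real.sinh (y * ρ) * ρ))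
          + (c₂ * Real.sinh (y * ρ) + c₂ * y * (Real.cosh (y * ρ) * ρ)))
        ((c₁ * (Real.sinh (x * ρ) * ρ)
          + (c₁ * (Real.sinh (x * ρ) * ρ) + c₁ * x * (Real.cosh (x * ρ) * ρ * ρ)))
        + (c₂ * (Real.cosh (x * ρ) * ρ)
          + (c₂ * (Real.cosh (x * ρ) * ρ) + c₂ * x * (Real.sinh (x * ρ) * ρ * ρ)))) x := by
      have hA := ((hc x).const_mul c₁).add
        ((((hasDerivAt_id x).const_mul c₁).mul ((hs x).mul_const ρ)))
      have hB := ((hs x).const_mul c₂).add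
        ((((hasDerivAt_id x).const_mul c₂).mul ((hc x).mul_const ρ)))
      have := hA.add hB
      exact this.congr_deriv (by simp only [id_eq, one_mul]; ring)
    have h3 : HasDerivAt (fun y : ℝ => a * μ * σt * ρ * (2 * y)) (a * μ * σt * ρ * 2) x := by
      have := ((hasDerivAt_id x).const_mul 2).const_mul (a * μ * σt * ρ)
      simpa using this
    have := (((h1.const_mul (-(a * μ * c₃ / Real.sinh ρ))).add_const (a * μ * c₁)).add
        h3).sub (h2.const_mul (a * μ))
    exact this.congr_deriv (by ring)
  have hD2 : deriv (deriv M₀) = g := by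
    rw [hD1]; exact funext fun x => (hM'' x).deriv
  refine ⟨?_, ?_, ?_⟩
  · intro y
    rw [hD2, hg, hA₀, hg₀, hc₃]
    field_simp
    all_goals ring
  · rw [hD1, hf]
    simp
  · rw [hM₀]
    simp only
    rw [hc₃]
    field_simp
    all_goals ring
end

section
/- For every positive integer k and every a_k ∈ ℝ, the function M_k(y') = −(a_k·μ·c₃·√(1+k²)/(k·sinh(ρ*·√(1+k²))))·(sinh(y'ρ*k) − tanh(ρ*k)·cosh(y'ρ*k)) + a_k·μ·c₃·sinh(y'ρ*·√(1+k²))/sinh(ρ*·√(1+k²)) + a_k·(γk² − μσ̃ρ* − μc₁)·cosh(y'ρ*k)/cosh(ρ*k) + a_k·μ·c₁·y' + a_k·μ·σ̃·ρ*·(y')² − a_k·μ·(c₁·y'·cosh(y'ρ*) + c₂·y'·sinh(y'ρ*)) satisfies −k²·M_k(y') + (1/ρ*²)·M_k''(y') = −μ·A_k(y') + a_k·g_k(y') for all y' ∈ ℝ, together with M_k'(0) = 0 and M_k(1) = γ·k²·a_k, where A_k(y') = a_k·c₁·(y'·cosh(y'ρ*) − (sinh(y'ρ*·√(1+k²))/sinh(ρ*·√(1+k²)))·cosh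 ρ*) + a_k·c₂·(y'·sinh(y'ρ*) − (sinh(y'ρ*·√(1+k²))/sinh(ρ*·√(1+k²)))·sinh ρ*) and g_k(y') = (2/ρ*)·μ·(σ̃ − c₁·sinh(y'ρ*) − c₂·cosh(y'ρ*)) − k²·μ·(c₁·y' + σ̃·ρ*·(y')² − c₂·y'·sinh(y'ρ*) − c₁·y'·cosh(y'ρ*)). -/
open Real

/-- for a positive integer k, the explicitly given M_k solves
−k²·M_k + (1/ρ*²)·M_k'' = −μ·A_k + a_k·g_k on ℝ with M_k'(0) = 0 and
M_k(1) = γ·k²·a_k. -/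
theorem stmt_12 (σ₁ σ₂ σt μ γ ρ : ℝ) (hμ : 0 < μ) (hρ : 0 < ρ)
    (k : ℕ) (hk : 0 < k) (a : ℝ)
    (c₁ c₂ c₃ : ℝ) (hc₁ : c₁ = (σ₂ - σ₁ * Real.cosh ρ) / Real.sinh ρ) (hc₂ : c₂ = σ₁)
    (hc₃ : c₃ = c₁ * Real.cosh ρ + c₂ * Real.sinh ρ)
    (Ak gk Mk : ℝ → ℝ)
    (hAk : Ak = fun y =>
      a * c₁ * (y * Real.cosh (y * ρ)
        - Real.sinh (y * ρ * Real.sqrt (1 + (k : ℝ)^2))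
          / Real.sinh (ρ * Real.sqrt (1 + (k : ℝ)^2)) * Real.cosh ρ)
      + a * c₂ * (y * Real.sinh (y * ρ)
        - Real.sinh (y * ρ * Real.sqrt (1 + (k : ℝ)^2))
          / Real.sinh (ρ * Real.sqrt (1 + (k : ℝ)^2)) * Real.sinh ρ))
    (hgk : gk = fun y =>
      (2 / ρ) * μ * (σt - c₁ * Real.sinh (y * ρ) - c₂ * Real.cosh (y * ρ))
      - (k : ℝ)^2 * μ * (c₁ * y + σt * ρ * y^2 - c₂ * y * Real.sinh (y * ρ)
        - c₁ * y * Real.cosh (y * ρ)))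
    (hMk : Mk = fun y =>
      -(a * μ * c₃ * Real.sqrt (1 + (k : ℝ)^2)
          / ((k : ℝ) * Real.sinh (ρ * Real.sqrt (1 + (k : ℝ)^2))))
        * (Real.sinh (y * ρ * k) - Real.tanh (ρ * k) * Real.cosh (y * ρ * k))
      + a * μ * c₃ * Real.sinh (y * ρ * Real.sqrt (1 + (k : ℝ)^2))
          / Real.sinh (ρ * Real.sqrt (1 + (k : ℝ)^2))
      + a * (γ * (k : ℝ)^2 - μ * σt * ρ - μ * c₁) * Real.cosh (y * ρ * k)
          / Real.cosh (ρ * k)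
      + a * μ * c₁ * y + a * μ * σt * ρ * y^2
      - a * μ * (c₁ * y * Real.cosh (y * ρ) + c₂ * y * Real.sinh (y * ρ))) :
    (∀ y : ℝ, -(k : ℝ)^2 * Mk y + (1 / ρ^2) * deriv (deriv Mk) y
      = -μ * Ak y + a * gk y) ∧
    deriv Mk 0 = 0 ∧ Mk 1 = γ * (k : ℝ)^2 * a := by
  set K := (k : ℝ) with hK
  set K := (k : ℝ) with hK
  have hK0 : K ≠ 0 := Nat.cast_ne_zero.mpr hk.ne'
  set s := Real.sqrt (1 + K ^ 2) with hs
  have hs0 : 0 < s := Real.sqrt_pos.2 (by positivity)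
  have hs2 : s ^ 2 = 1 + K ^ 2 := Real.sq_sqrt (by positivity)
  have hρ0 : ρ ≠ 0 := hρ.ne'
  have hsinh : Real.sinh (ρ * s) ≠ 0 := (Real.sinh_pos_iff.2 (mul_pos hρ hs0)).ne'
  have hcosh : Real.cosh (ρ * K) ≠ 0 := (Real.cosh_pos (ρ * K)).ne'
  -- first derivative
  obtain ⟨M1, hM1, hd1⟩ : ∃ M1 : ℝ → ℝ, M1 = (fun y =>
      -(a * μ * c₃ * s / (K * Real.sinh (ρ * s)))
        * (ρ * K * Real.cosh (y * ρ * K) - Real.tanh (ρ * K) * (ρ * K * Real.sinh (y * ρ * K)))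
      + a * μ * c₃ * (ρ * s * Real.cosh (y * ρ * s)) / Real.sinh (ρ * s)
      + a * (γ * K ^ 2 - μ * σt * ρ - μ * c₁) * (ρ * K * Real.sinh (y * ρ * K)) / Real.cosh (ρ * K)
      + a * μ * c₁ + a * μ * σt * ρ * (2 * y)
      - a * μ * (c₁ * (Real.cosh (y * ρ) + y * ρ * Real.sinh (y * ρ))
          + c₂ * (Real.sinh (y * ρ) + y * ρ * Real.cosh (y * ρ)))) ∧
      ∀ y, HasDerivAt Mk (M1 y) y := by
    refine ⟨_, rfl, fun y => ?_⟩
    rw [hMk]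
    have hyk : HasDerivAt (fun y : ℝ => y * ρ * K) (1 * ρ * K) y :=
      ((hasDerivAt_id y).mul_const ρ).mul_const K
    have hys : HasDerivAt (fun y : ℝ => y * ρ * s) (1 * ρ * s) y :=
      ((hasDerivAt_id y).mul_const ρ).mul_const s
    have hyρ : HasDerivAt (fun y : ℝ => y * ρ) (1 * ρ) y := (hasDerivAt_id y).mul_const ρ
    have t1 := (hyk.sinh.sub (hyk.cosh.const_mul (Real.tanh (ρ * K)))).const_mul
      (-(a * μ * c₃ * s / (K * Real.sinh (ρ * s))))
    have t2 := (hys.sinh.const_mul (a * μ * c₃)).div_const (Real.sinh (ρ * s))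
    have t3 := (hyk.cosh.const_mul (a * (γ * K ^ 2 - μ * σt * ρ - μ * c₁))).div_const
      (Real.cosh (ρ * K))
    have t4 := (hasDerivAt_id' (𝕜 := ℝ) y).const_mul (a * μ * c₁)
    have t5 := (hasDerivAt_pow 2 y).const_mul (a * μ * σt * ρ)
    have t6 := ((((hasDerivAt_id' (𝕜 := ℝ) y).const_mul c₁).mul hyρ.cosh).add
      (((hasDerivAt_id' (𝕜 := ℝ) y).const_mul c₂).mul hyρ.sinh)).const_mul (a * μ)
    have H := ((((t1.add t2).add t3).add t4).add t5).sub t6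
    refine H.congr_deriv ?_
    push_cast
    ring
  have e1 : deriv Mk = M1 := funext fun y => (hd1 y).deriv
  -- second derivative
  obtain ⟨M2, hM2, hd2⟩ : ∃ M2 : ℝ → ℝ, M2 = (fun y =>
      -(a * μ * c₃ * s / (K * Real.sinh (ρ * s)))
        * (ρ ^ 2 * K ^ 2 * Real.sinh (y * ρ * K)
          - Real.tanh (ρ * K) * (ρ ^ 2 * K ^ 2 * Real.cosh (y * ρ * K)))
      + a * μ * c₃ * (ρ ^ 2 * s ^ 2 * Real.sinh (y * ρ * s)) / Real.sinh (ρ * s)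
      + a * (γ * K ^ 2 - μ * σt * ρ - μ * c₁) * (ρ ^ 2 * K ^ 2 * Real.cosh (y * ρ * K))
          / Real.cosh (ρ * K)
      + a * μ * σt * ρ * 2
      - a * μ * (c₁ * (2 * ρ * Real.sinh (y * ρ) + y * ρ ^ 2 * Real.cosh (y * ρ))
          + c₂ * (2 * ρ * Real.cosh (y * ρ) + y * ρ ^ 2 * Real.sinh (y * ρ)))) ∧
      ∀ y, HasDerivAt M1 (M2 y) y := by
    refine ⟨_, rfl, fun y => ?_⟩
    rw [hM1]
    have hyk : HasDerivAt (fun y : ℝ => y * ρ * K) (1 * ρ * K) y :=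
      ((hasDerivAt_id y).mul_const ρ).mul_const K
    have hys : HasDerivAt (fun y : ℝ => y * ρ * s) (1 * ρ * s) y :=
      ((hasDerivAt_id y).mul_const ρ).mul_const s
    have hyρ : HasDerivAt (fun y : ℝ => y * ρ) (1 * ρ) y := (hasDerivAt_id y).mul_const ρ
    have t1 := ((hyk.cosh.const_mul (ρ * K)).sub
      ((hyk.sinh.const_mul (ρ * K)).const_mul (Real.tanh (ρ * K)))).const_mul
      (-(a * μ * c₃ * s / (K * Real.sinh (ρ * s))))
    have t2 := ((hys.cosh.const_mul (ρ * s)).const_mul (a * μ * c₃)).div_const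
      (Real.sinh (ρ * s))
    have t3 := ((hyk.sinh.const_mul (ρ * K)).const_mul
      (a * (γ * K ^ 2 - μ * σt * ρ - μ * c₁))).div_const (Real.cosh (ρ * K))
    have t4 := hasDerivAt_const y (a * μ * c₁)
    have t5 := ((hasDerivAt_id' (𝕜 := ℝ) y).const_mul 2).const_mul (a * μ * σt * ρ)
    have t6 := (((hyρ.cosh.add (((hasDerivAt_id' (𝕜 := ℝ) y).mul_const ρ).mul hyρ.sinh)).const_mul c₁).add
      ((hyρ.sinh.add (((hasDerivAt_id' (𝕜 := ℝ) y).mul_const ρ).mul hyρ.cosh)).const_mul c₂)).const_mul (a * μ)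
    have H := ((((t1.add t2).add t3).add t4).add t5).sub t6
    refine H.congr_deriv ?_
    push_cast
    ring
  have e2 : deriv (deriv Mk) = M2 := by
    rw [e1]; exact funext fun y => (hd2 y).deriv
  refine ⟨fun y => ?_, ?_, ?_⟩
  · rw [e2, hM2, hMk, hAk, hgk, hc₃]
    simp only
    rw [Real.tanh_eq_sinh_div_cosh, hs2]
    simp +zetaDelta only at hK0 hsinh hcosh ⊢
    field_simp
    ring
  · rw [e1, hM1]
    simp only [Real.sinh_zero, Real.cosh_zero, mul_zero, zero_mul, mul_one, zero_pow]
    field_simp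
    ring
  · rw [hMk, hc₃]
    simp only [one_mul, Real.tanh_eq_sinh_div_cosh, one_pow]
    field_simp
    ring
end

section
/- For every k ∈ ℕ, the two expressions for the eigenvalue agree: −μ·c₃·√(1+k²)/(sinh(ρ*·√(1+k²))·cosh(ρ*k)) + μ·c₃·√(1+k²)/tanh(ρ*·√(1+k²)) + (γ·k² − μ·σ̃·ρ* − μ·c₁)·k·tanh(ρ*k) + 2·μ·σ̃ + (μ/ρ*)·(c₁ − c₃) − μ·(c₁·sinh ρ* + c₂·cosh ρ*) = λ_k, provided that (σ̄₁ + σ̄₂)·(1 − cosh ρ*) + σ̃·ρ*·sinh ρ* = 0. -/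
open Real

/-- the two expressions for the eigenvalue λ_k agree, provided
(σ̄₁ + σ̄₂)·(1 − cosh ρ*) + σ̃·ρ*·sinh ρ* = 0. -/
theorem stmt_14 (σ₁ σ₂ σt μ γ ρ : ℝ)
    (hσ₁ : 0 < σ₁) (hσ₂ : 0 < σ₂) (hσt : 0 < σt) (hμ : 0 < μ) (hγ : 0 < γ) (hρ : 0 < ρ)
    (hstat : (σ₁ + σ₂) * (1 - Real.cosh ρ) + σt * ρ * Real.sinh ρ = 0)
    (c₁ c₂ c₃ : ℝ) (hc₁ : c₁ = (σ₂ - σ₁ * Real.cosh ρ) / Real.sinh ρ) (hc₂ : c₂ = σ₁)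
    (hc₃ : c₃ = c₁ * Real.cosh ρ + c₂ * Real.sinh ρ)
    (lam : ℕ → ℝ)
    (hlam : lam = fun (k : ℕ) => μ * (σ₂ * Real.cosh ρ - σ₁) * Real.sqrt (1 + (k : ℝ)^2)
        * (Real.cosh (ρ * Real.sqrt (1 + (k : ℝ)^2)) * Real.cosh (ρ * k) - 1)
        / (Real.sinh ρ * Real.sinh (ρ * Real.sqrt (1 + (k : ℝ)^2)) * Real.cosh (ρ * k))
      + (γ * (k : ℝ)^2 - μ * σt * ρ - μ * c₁) * (k : ℝ) * Real.tanh (ρ * k)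
      + μ * (σt - σ₂)) :
    ∀ k : ℕ,
      -(μ * c₃ * Real.sqrt (1 + (k : ℝ)^2))
          / (Real.sinh (ρ * Real.sqrt (1 + (k : ℝ)^2)) * Real.cosh (ρ * k))
      + μ * c₃ * Real.sqrt (1 + (k : ℝ)^2) / Real.tanh (ρ * Real.sqrt (1 + (k : ℝ)^2))
      + (γ * (k : ℝ)^2 - μ * σt * ρ - μ * c₁) * (k : ℝ) * Real.tanh (ρ * k)
      + 2 * μ * σt + (μ / ρ) * (c₁ - c₃)
      - μ * (c₁ * Real.sinh ρ + c₂ * Real.cosh ρ) = lam k := by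
  intro k
  have hs : 0 < Real.sinh ρ := Real.sinh_pos_iff.mpr hρ
  have hsq : 0 < Real.sqrt (1 + (k : ℝ)^2) :=
    Real.sqrt_pos.mpr (by positivity)
  have hS : 0 < Real.sinh (ρ * Real.sqrt (1 + (k : ℝ)^2)) :=
    Real.sinh_pos_iff.mpr (mul_pos hρ hsq)
  have hK : 0 < Real.cosh (ρ * (k : ℝ)) := Real.cosh_pos _
  have hC : 0 < Real.cosh (ρ * Real.sqrt (1 + (k : ℝ)^2)) := Real.cosh_pos _
  have hpyth := Real.cosh_sq_sub_sinh_sq ρ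
  have h3 : c₃ * Real.sinh ρ = σ₂ * Real.cosh ρ - σ₁ := by
    rw [hc₃, hc₁, hc₂]
    field_simp
    nlinarith [hpyth]
  have h4 : c₁ - c₃ = -(σt * ρ) := by
    have h : (c₁ - c₃) * Real.sinh ρ = -(σt * ρ) * Real.sinh ρ := by
      rw [hc₃, hc₁, hc₂]
      field_simp
      nlinarith [hpyth, hstat]
    exact mul_right_cancel₀ (ne_of_gt hs) h
  have h5 : c₁ * Real.sinh ρ + c₂ * Real.cosh ρ = σ₂ := by
    rw [hc₁, hc₂]; field_simp; ring
  rw [hlam]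
  simp only
  rw [Real.tanh_eq_sinh_div_cosh (ρ * Real.sqrt (1 + (k : ℝ)^2)), h4, h5]
  have hc3' : c₃ = (σ₂ * Real.cosh ρ - σ₁) / Real.sinh ρ :=
    eq_div_of_mul_eq (ne_of_gt hs) h3
  rw [hc3']
  field_simp
  ring
end

section
/- If ρ* > 0 satisfies (σ̄₁ + σ̄₂)·(1 − cosh ρ*) + σ̃·ρ*·sinh ρ* = 0, then λ₀ = μ·σ̃·(1 − ρ*/sinh ρ*), and in particular λ₀ > 0. -/
open Real

/-- if ρ* > 0 satisfies the stationarity condition, then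
λ₀ = μ·σ̃·(1 − ρ*/sinh ρ*) and λ₀ > 0. -/
theorem stmt_15 (σ₁ σ₂ σt μ γ ρ : ℝ)
    (hσ₁ : 0 < σ₁) (hσ₂ : 0 < σ₂) (hσt : 0 < σt) (hμ : 0 < μ) (hγ : 0 < γ) (hρ : 0 < ρ)
    (hstat : (σ₁ + σ₂) * (1 - Real.cosh ρ) + σt * ρ * Real.sinh ρ = 0)
    (c₁ : ℝ) (hc₁ : c₁ = (σ₂ - σ₁ * Real.cosh ρ) / Real.sinh ρ)
    (lam : ℕ → ℝ)
    (hlam : lam = fun (k : ℕ) => μ * (σ₂ * Real.cosh ρ - σ₁) * Real.sqrt (1 + (k : ℝ)^2)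
        * (Real.cosh (ρ * Real.sqrt (1 + (k : ℝ)^2)) * Real.cosh (ρ * k) - 1)
        / (Real.sinh ρ * Real.sinh (ρ * Real.sqrt (1 + (k : ℝ)^2)) * Real.cosh (ρ * k))
      + (γ * (k : ℝ)^2 - μ * σt * ρ - μ * c₁) * (k : ℝ) * Real.tanh (ρ * k)
      + μ * (σt - σ₂)) :
    lam 0 = μ * σt * (1 - ρ / Real.sinh ρ) ∧ 0 < lam 0 := by
  have hs : 0 < Real.sinh ρ := Real.sinh_pos_iff.2 hρ
  have hc : 1 < Real.cosh ρ := by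
    nlinarith [Real.cosh_sq ρ, Real.cosh_pos ρ]
  have hcsq : Real.cosh ρ ^ 2 - 1 = Real.sinh ρ ^ 2 := by
    have := Real.cosh_sq ρ; linarith
  have hlt : ρ < Real.sinh ρ := Real.self_lt_sinh_iff.2 hρ
  have h0 : lam 0 = μ * (σ₂ * Real.cosh ρ - σ₁) * (Real.cosh ρ - 1)
      / (Real.sinh ρ * Real.sinh ρ) + μ * (σt - σ₂) := by
    subst hlam
    simp [Real.sqrt_one]
  have heq : lam 0 = μ * σt * (1 - ρ / Real.sinh ρ) := by
    rw [h0]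
    field_simp
    linear_combination hstat + σ₂ * hcsq
  refine ⟨heq, ?_⟩
  rw [heq]
  have : 0 < 1 - ρ / Real.sinh ρ := by
    rw [sub_pos, div_lt_one hs]; exact hlt
  positivity
end

section
/- For fixed γ₀ > 0, the quotient λ_k(γ₀)/(k³·tanh(ρ*·k)) converges to γ₀ as the integer k tends to infinity; consequently there exists k₀ ∈ ℕ such that λ_k(γ₀) > 0 for all integers k > k₀. -/
open Real Filter

private lemma tanh_le_one' (x : ℝ) : Real.tanh x ≤ 1 := by
  rw [Real.tanh_eq_sinh_div_cosh, div_le_one (Real.cosh_pos _)]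
  nlinarith [Real.cosh_sub_sinh x, Real.exp_pos (-x)]

private lemma tanh_mono' {a b : ℝ} (hab : a ≤ b) : Real.tanh a ≤ Real.tanh b := by
  rw [Real.tanh_eq_sinh_div_cosh, Real.tanh_eq_sinh_div_cosh,
    div_le_div_iff₀ (Real.cosh_pos _) (Real.cosh_pos _)]
  have h : Real.sinh (a - b) ≤ 0 := by
    rw [← Real.sinh_zero, Real.sinh_le_sinh]; linarith
  rw [Real.sinh_sub] at h; linarith

private lemma tanh_pos' {x : ℝ} (hx : 0 < x) : 0 < Real.tanh x := by
  rw [Real.tanh_eq_sinh_div_cosh]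
  exact div_pos (Real.sinh_pos_iff.mpr hx) (Real.cosh_pos _)

set_option maxHeartbeats 1600000 in
private lemma key_bound (ρ p C D γ₀ x : ℝ) (hρ : 0 < ρ) (hx1 : 1 ≤ x) :
    |(p * Real.sqrt (1 + x^2) * (Real.cosh (ρ * Real.sqrt (1+x^2)) * Real.cosh (ρ*x) - 1)
        / (Real.sinh ρ * Real.sinh (ρ * Real.sqrt (1+x^2)) * Real.cosh (ρ*x))
      + (γ₀ * x^2 - C) * x * Real.tanh (ρ*x) + D) / (x^3 * Real.tanh (ρ*x)) - γ₀|
    ≤ ((2 * (|p| / Real.sinh ρ) * (1 + 1 / Real.sinh ρ) + |C| + |D|) / Real.tanh ρ) / x^2 := by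
  have hsρ : 0 < Real.sinh ρ := Real.sinh_pos_iff.mpr hρ
  have htρ : 0 < Real.tanh ρ := tanh_pos' hρ
  have hx0 : 0 < x := by linarith
  have hs1 : 1 ≤ Real.sqrt (1 + x^2) := by
    have := Real.sqrt_le_sqrt (show (1:ℝ) ≤ 1 + x^2 by nlinarith)
    simpa using this
  have hs2x : Real.sqrt (1 + x^2) ≤ 2 * x := by
    have h := Real.sqrt_le_sqrt (show 1 + x^2 ≤ (2*x)^2 by nlinarith)
    rwa [Real.sqrt_sq (by positivity : (0:ℝ) ≤ 2*x)] at h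
  generalize hsdef : Real.sqrt (1 + x^2) = s at *
  have hρs : ρ ≤ ρ * s := le_mul_of_one_le_right hρ.le hs1
  have hshs : Real.sinh ρ ≤ Real.sinh (ρ * s) := Real.sinh_le_sinh.mpr hρs
  have hshs0 : 0 < Real.sinh (ρ * s) := lt_of_lt_of_le hsρ hshs
  have hchx : 0 < Real.cosh (ρ * x) := Real.cosh_pos _
  have hchx1 : 1 ≤ Real.cosh (ρ * x) := Real.one_le_cosh _
  have hchs1 : 1 ≤ Real.cosh (ρ * s) := Real.one_le_cosh _
  have hT : 0 < Real.tanh (ρ * x) := tanh_pos' (mul_pos hρ hx0)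
  have hTρ : Real.tanh ρ ≤ Real.tanh (ρ * x) :=
    tanh_mono' (le_mul_of_one_le_right hρ.le hx1)
  have hT1 : Real.tanh (ρ * x) ≤ 1 := tanh_le_one' _
  have hd : 0 < x ^ 3 * Real.tanh (ρ * x) := by positivity
  set K : ℝ := |p| / Real.sinh ρ with hK
  set B : ℝ := 1 + 1 / Real.sinh ρ with hB
  have hK0 : 0 ≤ K := div_nonneg (abs_nonneg _) hsρ.le
  have hB0 : 0 < B := by rw [hB]; positivity
  clear_value K B
  set A : ℝ := p * s * (Real.cosh (ρ * s) * Real.cosh (ρ * x) - 1)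
      / (Real.sinh ρ * Real.sinh (ρ * s) * Real.cosh (ρ * x)) with hA
  have hQnn : 0 ≤ Real.cosh (ρ * s) * Real.cosh (ρ * x) - 1 := by nlinarith
  have hAbound : |A| ≤ 2 * K * B * x := by
    have hcoth : Real.cosh (ρ * s) ≤ Real.sinh (ρ * s) + 1 := by
      have h1 := Real.cosh_sub_sinh (ρ * s)
      have h2 : Real.exp (-(ρ * s)) ≤ 1 := Real.exp_le_one_iff.mpr (neg_nonpos.mpr (mul_nonneg hρ.le (by linarith)))
      linarith
    have hQ : (Real.cosh (ρ * s) * Real.cosh (ρ * x) - 1)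
        / (Real.sinh (ρ * s) * Real.cosh (ρ * x)) ≤ B := by
      rw [div_le_iff₀ (by positivity)]
      have h3 : (Real.sinh (ρ * s) + 1) * Real.cosh (ρ * x)
          ≤ B * (Real.sinh (ρ * s) * Real.cosh (ρ * x)) := by
        rw [hB]
        have heq : (1 + 1 / Real.sinh ρ) * (Real.sinh (ρ * s) * Real.cosh (ρ * x))
            = (Real.sinh (ρ * s) + Real.sinh (ρ * s) / Real.sinh ρ) * Real.cosh (ρ * x) := by
          field_simp
        rw [heq]
        have h4 : (1:ℝ) ≤ Real.sinh (ρ * s) / Real.sinh ρ := (one_le_div hsρ).mpr hshs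
        nlinarith [mul_nonneg (sub_nonneg.mpr h4) hchx.le]
      have h2b := mul_le_mul_of_nonneg_right hcoth hchx.le
      linarith
    have hrw : A = (p / Real.sinh ρ) * s
        * ((Real.cosh (ρ * s) * Real.cosh (ρ * x) - 1)
          / (Real.sinh (ρ * s) * Real.cosh (ρ * x))) := by
      rw [hA]; ring
    rw [hrw, abs_mul, abs_mul]
    have h1 : |p / Real.sinh ρ| = K := by rw [hK, abs_div, abs_of_pos hsρ]
    have h2 : |s| = s := abs_of_pos (by linarith)
    have h3 : |(Real.cosh (ρ * s) * Real.cosh (ρ * x) - 1)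
        / (Real.sinh (ρ * s) * Real.cosh (ρ * x))| ≤ B := by
      rwa [abs_of_nonneg (div_nonneg hQnn (by positivity))]
    rw [h1, h2]
    calc K * s * |(Real.cosh (ρ * s) * Real.cosh (ρ * x) - 1)
          / (Real.sinh (ρ * s) * Real.cosh (ρ * x))|
        ≤ K * s * B := mul_le_mul_of_nonneg_left h3 (by positivity)
      _ ≤ K * (2 * x) * B := by
          nlinarith [mul_nonneg (mul_nonneg hK0 hB0.le) (sub_nonneg.mpr hs2x)]
      _ = 2 * K * B * x := by ring
  clear_value A
  have hg : (A + (γ₀ * x^2 - C) * x * Real.tanh (ρ*x) + D)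
      - γ₀ * (x ^ 3 * Real.tanh (ρ * x))
      = A + D - C * x * Real.tanh (ρ * x) := by ring
  set C₃ : ℝ := 2 * K * B + |C| + |D| with hC₃
  have hC₃0 : 0 ≤ C₃ := by
    rw [hC₃]; positivity
  clear_value C₃
  have hgbound : |(A + (γ₀ * x^2 - C) * x * Real.tanh (ρ*x) + D)
      - γ₀ * (x ^ 3 * Real.tanh (ρ * x))| ≤ C₃ * x := by
    rw [hg, hC₃]
    have h1 : |A + D - C * x * Real.tanh (ρ * x)|
        ≤ |A| + |D| + |C * x * Real.tanh (ρ * x)| := by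
      calc |A + D - C * x * Real.tanh (ρ * x)| ≤ |A + D| + |C * x * Real.tanh (ρ * x)| :=
            abs_sub _ _
        _ ≤ |A| + |D| + |C * x * Real.tanh (ρ * x)| := by
            have := abs_add_le A D; linarith
    have h2 : |C * x * Real.tanh (ρ * x)| ≤ |C| * x := by
      rw [abs_mul, abs_mul, abs_of_pos hx0]
      have h5 : |Real.tanh (ρ * x)| ≤ 1 := abs_le.mpr ⟨by linarith, hT1⟩
      nlinarith [mul_nonneg (mul_nonneg (abs_nonneg C) hx0.le) (sub_nonneg.mpr h5)]
    have h3 : |D| ≤ |D| * x := le_mul_of_one_le_right (abs_nonneg _) hx1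
    have h4 : |A| ≤ (2 * K * B) * x := by linarith
    linarith
  have heq : (A + (γ₀ * x^2 - C) * x * Real.tanh (ρ*x) + D) / (x ^ 3 * Real.tanh (ρ * x)) - γ₀
      = ((A + (γ₀ * x^2 - C) * x * Real.tanh (ρ*x) + D)
        - γ₀ * (x ^ 3 * Real.tanh (ρ * x))) / (x ^ 3 * Real.tanh (ρ * x)) := by
    rw [sub_div, mul_div_assoc, div_self hd.ne', mul_one]
  rw [heq, abs_div, abs_of_pos hd, div_le_div_iff₀ hd (by positivity)]
  calc |(A + (γ₀ * x^2 - C) * x * Real.tanh (ρ*x) + D)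
        - γ₀ * (x ^ 3 * Real.tanh (ρ * x))| * x ^ 2
      ≤ C₃ * x * x ^ 2 := mul_le_mul_of_nonneg_right hgbound (by positivity)
    _ = (C₃ / Real.tanh ρ) * (Real.tanh ρ * x ^ 3) := by
        rw [← mul_assoc, div_mul_cancel₀ _ htρ.ne']; ring
    _ ≤ C₃ / Real.tanh ρ * (x ^ 3 * Real.tanh (ρ * x)) := by
        have h6 : Real.tanh ρ * x ^ 3 ≤ x ^ 3 * Real.tanh (ρ * x) := by
          nlinarith [mul_nonneg (pow_nonneg hx0.le 3) (sub_nonneg.mpr hTρ)]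
        exact mul_le_mul_of_nonneg_left h6 (div_nonneg hC₃0 htρ.le)

/-- for fixed γ₀ > 0, λ_k(γ₀)/(k³·tanh(ρ*·k)) → γ₀ as k → ∞;
consequently λ_k(γ₀) > 0 for all sufficiently large integers k. -/
theorem stmt_16 (σ₁ σ₂ σt μ ρ : ℝ)
    (hσ₁ : 0 < σ₁) (hσ₂ : 0 < σ₂) (hσt : 0 < σt) (hμ : 0 < μ) (hρ : 0 < ρ)
    (γ₀ : ℝ) (hγ₀ : 0 < γ₀)
    (c₁ : ℝ) (hc₁ : c₁ = (σ₂ - σ₁ * Real.cosh ρ) / Real.sinh ρ)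
    (lam : ℕ → ℝ → ℝ)
    (hlam : lam = fun (k : ℕ) (γ : ℝ) =>
      μ * (σ₂ * Real.cosh ρ - σ₁) * Real.sqrt (1 + (k : ℝ)^2)
        * (Real.cosh (ρ * Real.sqrt (1 + (k : ℝ)^2)) * Real.cosh (ρ * k) - 1)
        / (Real.sinh ρ * Real.sinh (ρ * Real.sqrt (1 + (k : ℝ)^2)) * Real.cosh (ρ * k))
      + (γ * (k : ℝ)^2 - μ * σt * ρ - μ * c₁) * (k : ℝ) * Real.tanh (ρ * k)
      + μ * (σt - σ₂)) :
    Tendsto (fun k : ℕ => lam k γ₀ / ((k : ℝ)^3 * Real.tanh (ρ * k))) atTop (nhds γ₀) ∧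
    ∃ k₀ : ℕ, ∀ k : ℕ, k₀ < k → 0 < lam k γ₀ := by
  have hlam' : ∀ k : ℕ, lam k γ₀
      = μ * (σ₂ * Real.cosh ρ - σ₁) * Real.sqrt (1 + (k : ℝ)^2)
        * (Real.cosh (ρ * Real.sqrt (1 + (k : ℝ)^2)) * Real.cosh (ρ * (k:ℝ)) - 1)
        / (Real.sinh ρ * Real.sinh (ρ * Real.sqrt (1 + (k : ℝ)^2)) * Real.cosh (ρ * (k:ℝ)))
      + (γ₀ * (k : ℝ)^2 - (μ * σt * ρ + μ * c₁)) * (k : ℝ) * Real.tanh (ρ * (k:ℝ))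
      + μ * (σt - σ₂) := by
    intro k; rw [hlam]; ring_nf
  have key : ∀ k : ℕ, 1 ≤ k →
      |lam k γ₀ / ((k : ℝ)^3 * Real.tanh (ρ * k)) - γ₀|
        ≤ ((2 * (|μ * (σ₂ * Real.cosh ρ - σ₁)| / Real.sinh ρ) * (1 + 1 / Real.sinh ρ)
            + |μ * σt * ρ + μ * c₁| + |μ * (σt - σ₂)|) / Real.tanh ρ) / (k : ℝ)^2 := by
    intro k hk
    have hx1 : (1 : ℝ) ≤ (k : ℝ) := by exact_mod_cast hk
    have h := key_bound ρ (μ * (σ₂ * Real.cosh ρ - σ₁)) (μ * σt * ρ + μ * c₁)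
      (μ * (σt - σ₂)) γ₀ (k : ℝ) hρ hx1
    rwa [← hlam' k] at h
  have hdpos : ∀ k : ℕ, 1 ≤ k → 0 < (k : ℝ)^3 * Real.tanh (ρ * k) := by
    intro k hk
    have hx1 : (1 : ℝ) ≤ (k : ℝ) := by exact_mod_cast hk
    have ht := tanh_pos' (show (0:ℝ) < ρ * k by nlinarith)
    have hx3 : (0:ℝ) < (k:ℝ)^3 := by positivity
    exact mul_pos hx3 ht
  have hzero : Tendsto (fun k : ℕ =>
      ((2 * (|μ * (σ₂ * Real.cosh ρ - σ₁)| / Real.sinh ρ) * (1 + 1 / Real.sinh ρ)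
        + |μ * σt * ρ + μ * c₁| + |μ * (σt - σ₂)|) / Real.tanh ρ) / (k : ℝ)^2)
      atTop (nhds 0) := by
    apply Tendsto.div_atTop tendsto_const_nhds
    exact (tendsto_pow_atTop (by norm_num : (2:ℕ) ≠ 0)).comp tendsto_natCast_atTop_atTop
  have htend : Tendsto (fun k : ℕ => lam k γ₀ / ((k : ℝ)^3 * Real.tanh (ρ * k)) - γ₀)
      atTop (nhds 0) := by
    apply squeeze_zero_norm' _ hzero
    filter_upwards [eventually_ge_atTop 1] with k hk
    exact key k hk
  have htend2 : Tendsto (fun k : ℕ => lam k γ₀ / ((k : ℝ)^3 * Real.tanh (ρ * k)))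
      atTop (nhds γ₀) := by
    have := htend.add_const γ₀
    simpa using this
  refine ⟨htend2, ?_⟩
  have hev : ∀ᶠ k : ℕ in atTop, 0 < lam k γ₀ := by
    have hpos : ∀ᶠ k : ℕ in atTop,
        0 < lam k γ₀ / ((k : ℝ)^3 * Real.tanh (ρ * k)) :=
      htend2.eventually (eventually_gt_nhds hγ₀)
    filter_upwards [hpos, eventually_ge_atTop 1] with k hk1 hk2
    have hd := hdpos k hk2
    have := mul_pos hk1 hd
    rwa [div_mul_cancel₀ _ (ne_of_gt hd)] at this
  obtain ⟨k₀, hk₀⟩ := eventually_atTop.mp hev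
  exact ⟨k₀, fun k hk => hk₀ k hk.le⟩
end

section
/- Assume σ̄₁ > σ̃ and σ̄₂ > σ̃ and that ρ* > 0 satisfies (σ̄₁ + σ̄₂)·(1 − cosh ρ*) + σ̃·ρ*·sinh ρ* = 0. Then there exists γ₀ > 0 such that for every γ ≥ γ₀ and every k ∈ ℕ (including k = 0), λ_k(γ) > 0. -/
open Real

lemma my_tanh_mono {x y : ℝ} (hx : 0 ≤ x) (hxy : x ≤ y) :
    Real.tanh x ≤ Real.tanh y := by
  rw [Real.tanh_eq_sinh_div_cosh, Real.tanh_eq_sinh_div_cosh,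
    div_le_div_iff₀ (Real.cosh_pos x) (Real.cosh_pos y)]
  nlinarith [Real.sinh_sub y x, Real.sinh_nonneg_iff.mpr (by linarith : (0:ℝ) ≤ y - x),
    Real.cosh_pos x, Real.cosh_pos y]

lemma my_coth_anti {x y : ℝ} (hx : 0 < x) (hxy : x ≤ y) :
    Real.cosh y / Real.sinh y ≤ Real.cosh x / Real.sinh x := by
  rw [div_le_div_iff₀ (Real.sinh_pos_iff.mpr (lt_of_lt_of_le hx hxy)) (Real.sinh_pos_iff.mpr hx)]
  nlinarith [Real.sinh_sub y x, Real.sinh_nonneg_iff.mpr (by linarith : (0:ℝ) ≤ y - x),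
    Real.cosh_pos x, Real.cosh_pos y]

set_option maxHeartbeats 1600000 in
/-- if σ̄₁ > σ̃, σ̄₂ > σ̃ and ρ* > 0 satisfies the stationarity
condition, then there exists γ₀ > 0 such that λ_k(γ) > 0 for every γ ≥ γ₀ and
every k ∈ ℕ (including k = 0). -/
theorem stmt_18 (σ₁ σ₂ σt μ ρ : ℝ)
    (hσ₁ : 0 < σ₁) (hσ₂ : 0 < σ₂) (hσt : 0 < σt) (hμ : 0 < μ) (hρ : 0 < ρ)
    (h₁ : σt < σ₁) (h₂ : σt < σ₂)
    (hstat : (σ₁ + σ₂) * (1 - Real.cosh ρ) + σt * ρ * Real.sinh ρ = 0)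
    (c₁ : ℝ) (hc₁ : c₁ = (σ₂ - σ₁ * Real.cosh ρ) / Real.sinh ρ)
    (lam : ℕ → ℝ → ℝ)
    (hlam : lam = fun (k : ℕ) (γ : ℝ) =>
      μ * (σ₂ * Real.cosh ρ - σ₁) * Real.sqrt (1 + (k : ℝ)^2)
        * (Real.cosh (ρ * Real.sqrt (1 + (k : ℝ)^2)) * Real.cosh (ρ * k) - 1)
        / (Real.sinh ρ * Real.sinh (ρ * Real.sqrt (1 + (k : ℝ)^2)) * Real.cosh (ρ * k))
      + (γ * (k : ℝ)^2 - μ * σt * ρ - μ * c₁) * (k : ℝ) * Real.tanh (ρ * k)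
      + μ * (σt - σ₂)) :
    ∃ γ₀ : ℝ, 0 < γ₀ ∧ ∀ γ : ℝ, γ₀ ≤ γ → ∀ k : ℕ, 0 < lam k γ := by
  have hs : 0 < Real.sinh ρ := Real.sinh_pos_iff.mpr hρ
  have hch : 1 < Real.cosh ρ := Real.one_lt_cosh.mpr hρ.ne'
  have hT : 0 < Real.tanh ρ := by
    rw [Real.tanh_eq_sinh_div_cosh]; exact div_pos hs (Real.cosh_pos ρ)
  set d : ℝ := σ₂ * Real.cosh ρ - σ₁ with hd
  set A : ℝ := μ * |d| * Real.sqrt 2 * Real.cosh ρ / (Real.sinh ρ)^2 with hA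
  set B : ℝ := μ * σt * ρ + μ * c₁ with hB
  set Cc : ℝ := μ * (σt - σ₂) with hCc
  have hA0 : 0 ≤ A := by positivity
  clear_value d A B Cc
  refine ⟨max 1 (B + (A + |Cc| + 1) / Real.tanh ρ),
    lt_of_lt_of_le one_pos (le_max_left _ _), ?_⟩
  intro γ hγ k
  have hγ1 : 1 ≤ γ := le_trans (le_max_left _ _) hγ
  have hγ2 : B + (A + |Cc| + 1) / Real.tanh ρ ≤ γ := le_trans (le_max_right _ _) hγ
  subst hlam
  beta_reduce
  rcases Nat.eq_zero_or_pos k with hk | hk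
  · subst hk
    simp only [Nat.cast_zero, ne_eq, mul_zero, Real.cosh_zero, Real.tanh_zero]
    norm_num [Real.sqrt_one]
    -- goal: 0 < μ * d * (cosh ρ - 1) / (sinh ρ * sinh ρ) + μ * (σt - σ₂)
    have key : σt * ρ * Real.sinh ρ = (σ₁ + σ₂) * (Real.cosh ρ - 1) := by nlinarith [hstat]
    have hsq : Real.sinh ρ * Real.sinh ρ = Real.cosh ρ ^ 2 - 1 := by
      nlinarith [Real.cosh_sq_sub_sinh_sq ρ]
    have hρs : ρ < Real.sinh ρ := Real.self_lt_sinh_iff.mpr hρ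
    have h : 0 < μ * d * (Real.cosh ρ - 1) + Cc * (Real.sinh ρ * Real.sinh ρ) := by
      have h5 : (σ₁ + σ₂) < σt * (Real.cosh ρ + 1) := by
        have h6 : σt * ρ * Real.sinh ρ < σt * Real.sinh ρ * Real.sinh ρ := by
          nlinarith [mul_pos (mul_pos hσt (sub_pos.mpr hρs)) hs]
        nlinarith [key, hsq, h6, sub_pos.mpr hch]
      have expand : μ * d * (Real.cosh ρ - 1) + Cc * (Real.cosh ρ ^ 2 - 1)
          = μ * ((Real.cosh ρ - 1) * (σt * (Real.cosh ρ + 1) - (σ₁ + σ₂))) := by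
        rw [hd, hCc]; ring
      rw [hsq, expand]
      exact mul_pos hμ (mul_pos (by linarith) (by linarith))
    have heq : μ * d * (Real.cosh ρ - 1) / (Real.sinh ρ * Real.sinh ρ) + Cc
        = (μ * d * (Real.cosh ρ - 1) + Cc * (Real.sinh ρ * Real.sinh ρ))
          / (Real.sinh ρ * Real.sinh ρ) := by
      field_simp
    rw [heq]
    exact div_pos h (by positivity)
  · set K : ℝ := (k : ℝ) with hKdef
    have hK : 1 ≤ K := by rw [hKdef]; exact_mod_cast hk
    have hK0 : 0 < K := lt_of_lt_of_le one_pos hK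
    set S : ℝ := Real.sqrt (1 + K ^ 2) with hSdef
    have hS1 : 1 ≤ S := Real.one_le_sqrt.mpr (by nlinarith)
    have hS2 : S ≤ Real.sqrt 2 * K := by
      have h1 : (1 : ℝ) + K ^ 2 ≤ 2 * K ^ 2 := by nlinarith
      calc S ≤ Real.sqrt (2 * K ^ 2) := Real.sqrt_le_sqrt h1
        _ = Real.sqrt 2 * K := by
            rw [Real.sqrt_mul (by norm_num), Real.sqrt_sq hK0.le]
    have hsinhS : 0 < Real.sinh (ρ * S) := Real.sinh_pos_iff.mpr (by positivity)
    have hcoshK : 1 ≤ Real.cosh (ρ * K) := Real.one_le_cosh _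
    have hcoshS : 1 ≤ Real.cosh (ρ * S) := Real.one_le_cosh _
    set num : ℝ := Real.cosh (ρ * S) * Real.cosh (ρ * K) - 1 with hnum
    set den : ℝ := Real.sinh ρ * Real.sinh (ρ * S) * Real.cosh (ρ * K) with hden
    have hden0 : 0 < den := by positivity
    have hnum0 : 0 ≤ num := by nlinarith
    set E : ℝ := S * num / den with hE
    have hE0 : 0 ≤ E := by positivity
    clear_value K S num den E
    have hfrac : num / den ≤ Real.cosh ρ / (Real.sinh ρ * Real.sinh ρ) := by
      have step1 : num / den ≤ Real.cosh (ρ * S) / (Real.sinh ρ * Real.sinh (ρ * S)) := by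
        rw [div_le_div_iff₀ hden0 (by positivity)]
        have : num ≤ Real.cosh (ρ * S) * Real.cosh (ρ * K) := by simp [hnum]
        nlinarith [Real.cosh_pos (ρ * K), Real.cosh_pos (ρ * S)]
      have step2 : Real.cosh (ρ * S) / Real.sinh (ρ * S) ≤ Real.cosh ρ / Real.sinh ρ :=
        my_coth_anti hρ (by nlinarith)
      calc num / den ≤ Real.cosh (ρ * S) / (Real.sinh ρ * Real.sinh (ρ * S)) := step1
        _ = (Real.cosh (ρ * S) / Real.sinh (ρ * S)) / Real.sinh ρ := by ring
        _ ≤ (Real.cosh ρ / Real.sinh ρ) / Real.sinh ρ := by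
            exact div_le_div_of_nonneg_right step2 hs.le |>.trans_eq rfl
        _ = Real.cosh ρ / (Real.sinh ρ * Real.sinh ρ) := by ring
    have hEle : E ≤ Real.sqrt 2 * K * (Real.cosh ρ / (Real.sinh ρ * Real.sinh ρ)) := by
      have : E = S * (num / den) := by rw [hE, mul_div_assoc]
      rw [this]
      have h2 : (0:ℝ) ≤ Real.sqrt 2 * K := by positivity
      exact mul_le_mul hS2 hfrac (by positivity) h2
    have hAK : μ * |d| * E ≤ A * K := by
      have : μ * |d| * E ≤ μ * |d| * (Real.sqrt 2 * K * (Real.cosh ρ / (Real.sinh ρ * Real.sinh ρ))) :=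
        mul_le_mul_of_nonneg_left hEle (by positivity)
      have heq : μ * |d| * (Real.sqrt 2 * K * (Real.cosh ρ / (Real.sinh ρ * Real.sinh ρ))) = A * K := by
        rw [hA]; field_simp
      linarith [this.trans_eq heq]
    have hT1 : -(A * K) ≤ μ * d * S * num / den := by
      have h1 : μ * d * S * num / den = μ * d * E := by rw [hE]; ring
      have h2 : -(μ * |d| * E) ≤ μ * d * E := by
        have := neg_abs_le d
        nlinarith [mul_nonneg hμ.le hE0]
      linarith [h1 ▸ h2]
    -- Term 2 bound
    have hγB : B ≤ γ := by
      have : 0 ≤ (A + |Cc| + 1) / Real.tanh ρ := by positivity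
      linarith
    have htanh : Real.tanh ρ ≤ Real.tanh (ρ * K) := my_tanh_mono hρ.le (by nlinarith)
    have hterm2 : (γ - B) * (K * Real.tanh ρ) ≤ (γ * K ^ 2 - B) * (K * Real.tanh (ρ * K)) := by
      have ha : γ - B ≤ γ * K ^ 2 - B := by
        have : 0 ≤ γ * (K ^ 2 - 1) := mul_nonneg (by linarith) (by nlinarith)
        linarith
      have hc : K * Real.tanh ρ ≤ K * Real.tanh (ρ * K) :=
        mul_le_mul_of_nonneg_left htanh hK0.le
      exact mul_le_mul ha hc (by positivity) (by nlinarith)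
    rw [
      show γ * K ^ 2 - μ * σt * ρ - μ * c₁ = γ * K ^ 2 - B by rw [hB]; ring]
    -- final assembly
    have hγT : A + |Cc| + 1 ≤ (γ - B) * Real.tanh ρ := by
      have : (A + |Cc| + 1) / Real.tanh ρ ≤ γ - B := by linarith
      calc A + |Cc| + 1 = (A + |Cc| + 1) / Real.tanh ρ * Real.tanh ρ := by
            field_simp
        _ ≤ (γ - B) * Real.tanh ρ := mul_le_mul_of_nonneg_right this hT.le
    have hCcabs : -|Cc| ≤ Cc := neg_abs_le Cc
    have hterm2' : (γ - B) * (K * Real.tanh ρ) ≤ (γ * K ^ 2 - B) * K * Real.tanh (ρ * K) := by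
      rw [mul_assoc]; exact hterm2
    have hfac : 0 ≤ (γ - B) * Real.tanh ρ - A := by linarith [hγT, abs_nonneg Cc]
    have hm : (γ - B) * Real.tanh ρ - A ≤ K * ((γ - B) * Real.tanh ρ - A) :=
      le_mul_of_one_le_left hfac hK
    have hring : K * ((γ - B) * Real.tanh ρ - A) = (γ - B) * (K * Real.tanh ρ) - A * K := by
      ring
    linarith [hT1, hterm2', hm, hring, hγT, hCcabs]
end

section
/- If σ̄₁ > σ̃ > 0 and σ̄₂ > σ̃, then α := (σ̄₁ + σ̄₂)/σ̃ > 2, and any ρ* > 0 with α·(1 − cosh ρ*) + ρ*·sinh ρ* = 0 satisfies σ̄₂·cosh ρ* − σ̄₁ > 0. -/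
open Real

/-- if σ̄₁ > σ̃ > 0 and σ̄₂ > σ̃, then α := (σ̄₁ + σ̄₂)/σ̃ > 2,
and any ρ* > 0 with α·(1 − cosh ρ*) + ρ*·sinh ρ* = 0 satisfies
σ̄₂·cosh ρ* − σ̄₁ > 0. -/
theorem stmt_19 (σ₁ σ₂ σt : ℝ) (hσ₁ : 0 < σ₁) (hσ₂ : 0 < σ₂) (hσt : 0 < σt)
    (h₁ : σt < σ₁) (h₂ : σt < σ₂)
    (α : ℝ) (hα : α = (σ₁ + σ₂) / σt) :
    2 < α ∧ ∀ ρ : ℝ, 0 < ρ → α * (1 - Real.cosh ρ) + ρ * Real.sinh ρ = 0 →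
      0 < σ₂ * Real.cosh ρ - σ₁ := by
  have hαgt : 2 < α := by
    rw [hα, lt_div_iff₀ hσt]; nlinarith
  refine ⟨hαgt, fun ρ hρ heq => ?_⟩
  have hcosh : 1 < Real.cosh ρ := Real.one_lt_cosh.mpr (ne_of_gt hρ)
  have hsinh : ρ < Real.sinh ρ := Real.self_lt_sinh_iff.mpr hρ
  have hsq : Real.cosh ρ ^ 2 - Real.sinh ρ ^ 2 = 1 := Real.cosh_sq_sub_sinh_sq ρ
  have hsinhpos : 0 < Real.sinh ρ := Real.sinh_pos_iff.mpr hρ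
  -- α < cosh ρ + 1
  have h3 : α < Real.cosh ρ + 1 := by nlinarith
  -- σ₁ < (α - 1) σ₂
  have h4 : σ₁ < (α - 1) * σ₂ := by
    have : α * σt = σ₁ + σ₂ := by rw [hα, div_mul_cancel₀ _ hσt.ne']
    nlinarith
  nlinarith
end
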